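/- Relation between the two families of braided integers: for every object Y of 𝒞 and every n ≥ 1, [n]′ = (ψ_{n-1,1})^{-1} ∘ [n]; equivalently, ψ_1∘ψ_2∘⋯∘ψ_{n-1}∘[n]′ = [n] as endomorphisms of Y^{⊗n}. -/

import Mathlib

open CategoryTheory MonoidalCategory

universe v u

variable {C : Type u} [Category.{v} C] [MonoidalCategory C] [BraidedCategory C]
variable [Preadditive C] [MonoidalPreadditive C]

/-- The `n`-fold tensor power of an object, left-nested: `Y^{⊗0} = 𝟙_C`,
`Y^{⊗(n+1)} = Y^{⊗n} ⊗ Y`. -/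
def TPow (Y : C) : ℕ → C
  | 0 => 𝟙_ C
  | n + 1 => TPow Y n ⊗ Y

/-- The braiding of the last two factors of `Y^{⊗(n+2)}` (coherences inserted). -/
def swapLast (Y : C) (n : ℕ) : TPow Y (n + 2) ⟶ TPow Y (n + 2) :=
  (α_ (TPow Y n) Y Y).hom ≫ (𝟙 (TPow Y n) ⊗ₘ (β_ Y Y).hom) ≫ (α_ (TPow Y n) Y Y).inv

/-- `ψ_i : Y^{⊗n} → Y^{⊗n}`, the braiding of the `i`-th and `(i+1)`-st factors
(`1 ≤ i ≤ n-1`; junk identity outside this range). -/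
def psiAt (Y : C) : (n : ℕ) → ℕ → (TPow Y n ⟶ TPow Y n)
  | 0, _ => 𝟙 _
  | 1, _ => 𝟙 _
  | n + 2, i => if i = n + 1 then swapLast Y n else psiAt Y (n + 1) i ⊗ₘ 𝟙 Y

/-- The inverse braiding `ψ_i⁻¹` of the `i`-th and `(i+1)`-st factors. -/
def psiInvAt (Y : C) : (n : ℕ) → ℕ → (TPow Y n ⟶ TPow Y n)
  | 0, _ => 𝟙 _
  | 1, _ => 𝟙 _
  | n + 2, i => if i = n + 1 then
      (α_ (TPow Y n) Y Y).hom ≫ (𝟙 (TPow Y n) ⊗ₘ (β_ Y Y).inv) ≫ (α_ (TPow Y n) Y Y).inv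
    else psiInvAt Y (n + 1) i ⊗ₘ 𝟙 Y

/-- `ψ_j ∘ ψ_{j-1} ∘ ⋯ ∘ ψ_1` read in application order: apply `ψ_j` first, …, `ψ_1` last;
i.e. the composite `ψ_1∘ψ_2∘⋯∘ψ_j`. -/
def chainDesc (Y : C) (n : ℕ) : ℕ → (TPow Y n ⟶ TPow Y n)
  | 0 => 𝟙 _
  | j + 1 => psiAt Y n (j + 1) ≫ chainDesc Y n j

/-- The braided integer `[n] = Σ_{j=0}^{n-1} ψ_1∘ψ_2∘⋯∘ψ_j`. -/
def bint (Y : C) (n : ℕ) : TPow Y n ⟶ TPow Y n :=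
  ∑ j ∈ Finset.range n, chainDesc Y n j

/-- `ψ_{n-1,1} = ψ_1∘ψ_2∘⋯∘ψ_{n-1}`. -/
def psiLast (Y : C) (n : ℕ) : TPow Y n ⟶ TPow Y n := chainDesc Y n (n - 1)

/-- The composite `ψ_{n-1}⁻¹∘ψ_{n-2}⁻¹∘⋯∘ψ_{n-j}⁻¹` (apply `ψ_{n-j}⁻¹` first). -/
def chainInvDown (Y : C) (n : ℕ) : ℕ → (TPow Y n ⟶ TPow Y n)
  | 0 => 𝟙 _
  | j + 1 => psiInvAt Y n (n - (j + 1)) ≫ chainInvDown Y n j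

/-- The braided integer `[n]′ = Σ_{j=0}^{n-1} ψ_{n-1}⁻¹∘ψ_{n-2}⁻¹∘⋯∘ψ_{n-j}⁻¹`. -/
def bint' (Y : C) (n : ℕ) : TPow Y n ⟶ TPow Y n :=
  ∑ j ∈ Finset.range n, chainInvDown Y n j

lemma psiInv_psi (Y : C) : ∀ (n i : ℕ), psiInvAt Y n i ≫ psiAt Y n i = 𝟙 _
  | 0, _ => by simp [psiInvAt, psiAt]
  | 1, _ => by simp [psiInvAt, psiAt]
  | n + 2, i => by
    by_cases h : i = n + 1
    · subst h
      simp [psiInvAt, psiAt, swapLast]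
      simp [TPow]
    · simp only [psiInvAt, psiAt, h, if_false, tensorHom_comp_tensorHom, psiInv_psi Y (n + 1) i]
      erw [tensorHom_comp_tensorHom, psiInv_psi Y (n + 1) i]
      simp [TPow]

lemma chainInvDown_comp (Y : C) (n : ℕ) : ∀ j, j ≤ n - 1 →
    chainInvDown Y n j ≫ chainDesc Y n (n - 1) = chainDesc Y n (n - 1 - j)
  | 0, _ => by simp [chainInvDown]
  | j + 1, h => by
    have hj : j ≤ n - 1 := by omega
    have h1 : n - 1 - j = (n - 1 - (j + 1)) + 1 := by omega
    have h2 : n - (j + 1) = n - 1 - j := by omega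
    rw [chainInvDown, Category.assoc, chainInvDown_comp Y n j hj, h1, chainDesc, h2, h1,
      ← Category.assoc, psiInv_psi, Category.id_comp]

/-- `ψ_1∘ψ_2∘⋯∘ψ_{n-1}∘[n]′ = [n]`, i.e. `[n]′ = (ψ_{n-1,1})⁻¹ ∘ [n]`. -/
theorem bint'_eq (Y : C) (n : ℕ) (hn : 1 ≤ n) :
    bint' Y n ≫ psiLast Y n = bint Y n := by
  rw [bint', bint, psiLast, Preadditive.sum_comp]
  rw [← Finset.sum_range_reflect (fun j => chainDesc Y n j) n]
  apply Finset.sum_congr rfl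
  intro j hj
  simp only [Finset.mem_range] at hj
  exact chainInvDown_comp Y n j (by omega)
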